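/- If φ ∈ Φ_ex with γ = γ_φ, then for every x ≥ 0 and every h ∈ (0,1], φ(x+h) − φ(x) ≤ h·(γ·φ(1) + (γ−1)·φ(x)). -/
import Mathlib


open Set Filter

/-- `Φ`: convex, strictly increasing bijections of `[0,∞)` (with `φ 0 = 0`). -/
def Phi (φ : ℝ → ℝ) : Prop :=
  ConvexOn ℝ (Ici 0) φ ∧ StrictMonoOn φ (Ici 0) ∧
    Set.BijOn φ (Ici 0) (Ici 0) ∧ φ 0 = 0

/-- `γ_φ = sup_{x ≥ 0} φ(1+x)/(φ(1)+φ(x))`, valued in `[0,∞]`. -/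
noncomputable def gam (φ : ℝ → ℝ) : ENNReal :=
  ⨆ x : Ici (0:ℝ), ENNReal.ofReal (φ (1 + x) / (φ 1 + φ x))

/-- If `φ ∈ Φ_ex` with `γ = γ_φ`, then for `x ≥ 0` and `h ∈ (0,1]`,
`φ(x+h) − φ(x) ≤ h (γ φ(1) + (γ−1) φ(x))`. -/
theorem stmt_11 (φ : ℝ → ℝ) (hφ : Phi φ) (γ : ℝ)
    (hγ : gam φ = ENNReal.ofReal γ) (hγ0 : 0 ≤ γ) :
    ∀ x : ℝ, 0 ≤ x → ∀ h : ℝ, 0 < h → h ≤ 1 →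
      φ (x + h) - φ x ≤ h * (γ * φ 1 + (γ - 1) * φ x) := by
  intro x hx h hh hh1
  obtain ⟨hconv, hmono, hbij, h0⟩ := hφ
  have hφx : 0 ≤ φ x := by
    rcases eq_or_lt_of_le hx with h' | h'
    · simp [← h', h0]
    · exact le_of_lt (h0 ▸ hmono self_mem_Ici hx h')
  have hφ1 : 0 < φ 1 := h0 ▸ hmono self_mem_Ici (by norm_num) one_pos
  have hden : 0 < φ 1 + φ x := by linarith
  have hle : φ (1 + x) / (φ 1 + φ x) ≤ γ := by
    have hsup : ENNReal.ofReal (φ (1 + x) / (φ 1 + φ x)) ≤ gam φ :=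
      le_iSup (fun y : Ici (0:ℝ) => ENNReal.ofReal (φ (1 + y) / (φ 1 + φ y)))
        (⟨x, hx⟩ : Ici (0:ℝ))
    rw [hγ] at hsup
    exact (ENNReal.ofReal_le_ofReal_iff hγ0).mp hsup
  have h1x : φ (1 + x) ≤ γ * (φ 1 + φ x) := (div_le_iff₀ hden).mp hle
  have hconv' : φ (x + h) ≤ (1 - h) * φ x + h * φ (1 + x) := by
    have := hconv.2 (hx : x ∈ Ici 0) (show (1 + x : ℝ) ∈ Ici 0 by
      simp only [mem_Ici]; linarith) (by linarith : (0:ℝ) ≤ 1 - h) hh.le (by ring)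
    simpa [smul_eq_mul, show (1 - h) * x + h * (1 + x) = x + h by ring] using this
  have := mul_le_mul_of_nonneg_left h1x hh.le
  nlinarith
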